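/- Let G be a finite simple graph on vertex set V, and let S ⊆ V be a set of vertices with S ≠ V such that every vertex not in S has at most one neighbor in S. Then there is no linked order of G whose first two vertices both belong to S. In particular, if a, b ∈ S, there is no linked order of G starting with a, b. -/

import Mathlib

/-- A linked order of a finite simple graph `G` is an enumeration of all vertices
(as a duplicate-free list containing every vertex) such that the first two vertices
are adjacent and every vertex in position `i ≥ 3` (1-indexed; i.e., preceded by at
least two vertices) has at least two neighbors among the preceding vertices. -/
def IsLinkedOrder {V : Type*} [Fintype V] [DecidableEq V]
    (G : SimpleGraph V) [DecidableRel G.Adj] (l : List V) : Prop :=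
  (∀ v : V, v ∈ l) ∧ l.Nodup ∧
  (∀ a b rest, l = a :: b :: rest → G.Adj a b) ∧
  (∀ pre c suf, l = pre ++ c :: suf → 2 ≤ pre.length →
    2 ≤ (pre.toFinset ∩ G.neighborFinset c).card)

/-- If `S ≠ V` and every vertex outside `S` has at most one neighbor in `S`,
then no linked order of `G` starts with two vertices of `S`. -/
theorem no_linked_order_starting_in_S {V : Type*} [Fintype V] [DecidableEq V]
    (G : SimpleGraph V) [DecidableRel G.Adj]
    (S : Finset V) (hS : S ≠ Finset.univ)
    (hdeg : ∀ v ∉ S, (G.neighborFinset v ∩ S).card ≤ 1) :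
    ¬ ∃ (a b : V) (rest : List V),
        a ∈ S ∧ b ∈ S ∧ IsLinkedOrder G (a :: b :: rest) := by
  rintro ⟨a, b, rest, haS, hbS, hall, hnd, hadj, hlink⟩
  set l : List V := a :: b :: rest with hl
  -- there is a vertex not in S
  obtain ⟨v, hvS⟩ : ∃ v, v ∉ S := by
    by_contra h
    push_neg at h
    exact hS (Finset.eq_univ_iff_forall.2 h)
  set p : V → Bool := fun x => decide (x ∈ S) with hp
  -- the dropWhile part is nonempty
  have hdropne : l.dropWhile p ≠ [] := by
    intro h
    have := List.dropWhile_eq_nil_iff.1 h v (hall v)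
    simp [hp] at this
    exact hvS this
  set pre := l.takeWhile p with hpre
  set c := (l.dropWhile p).head hdropne with hc
  set suf := (l.dropWhile p).tail with hsuf
  have hsplit : l = pre ++ c :: suf := by
    rw [hpre, hc, hsuf, List.cons_head_tail, List.takeWhile_append_dropWhile]
  have hcS : c ∉ S := by
    have := List.head_dropWhile_not p (l := l) hdropne
    simpa [hp] using this
  have hprelen : 2 ≤ pre.length := by
    have : pre = a :: b :: (rest.takeWhile p) := by
      rw [hpre, hl, List.takeWhile_cons_of_pos, List.takeWhile_cons_of_pos]
      · simp [hp, hbS]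
      · simp [hp, haS]
    rw [this]
    simp
  have h2 := hlink pre c suf hsplit hprelen
  have hsubset : pre.toFinset ∩ G.neighborFinset c ⊆ G.neighborFinset c ∩ S := by
    intro x hx
    rw [Finset.mem_inter] at hx ⊢
    refine ⟨hx.2, ?_⟩
    have := List.mem_takeWhile_imp (List.mem_toFinset.1 hx.1)
    simpa [hp] using this
  have := le_trans h2 (Finset.card_le_card hsubset)
  exact absurd (le_trans this (hdeg c hcS)) (by norm_num)
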